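/- Fix k, r ∈ ℕ and a finite simple graph G. A (k,r)-hideout in G is a nonempty set U ⊆ V(G) such that for every v ∈ U and every set A ⊆ V(G) ∖ {v} with |A| < k, there is a walk of length at most r in G from v to some vertex of U ∖ {v} that avoids A (none of its vertices lies in A). Then the following are equivalent: (i) G has no (k,r)-hideout; (ii) there is a linear order on V(G) such that for every vertex v there exists a set A ⊆ V(G) ∖ {v} with |A| < k such that no walk of length at most r in G that avoids A joins v to a vertex w with w < v. -/

import Mathlib

/-- A finite graph `G` has no `(k, r)`-hideout (a nonempty set `U` such that every
`v ∈ U` can, for every blocking set `A` of fewer than `k` vertices not containing `v`,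
reach some other vertex of `U` by a walk of length at most `r` avoiding `A`) if and
only if there is a linear order on `V(G)` such that every vertex `v` admits a blocking
set `A` of fewer than `k` vertices (with `v ∉ A`) cutting all walks of length at most
`r` from `v` to smaller vertices. -/
theorem stmt17 {V : Type*} [Fintype V] (k r : ℕ) (G : SimpleGraph V) :
    (¬ ∃ U : Set V, U.Nonempty ∧
        ∀ v ∈ U, ∀ A : Finset V, v ∉ A → A.card < k →
          ∃ u ∈ U, u ≠ v ∧ ∃ p : G.Walk v u, p.length ≤ r ∧ ∀ x ∈ p.support, x ∉ A)
      ↔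
    (∃ lt : V → V → Prop, IsStrictTotalOrder V lt ∧
      ∀ v : V, ∃ A : Finset V, v ∉ A ∧ A.card < k ∧
        ∀ w : V, lt w v →
          ¬ ∃ p : G.Walk v w, p.length ≤ r ∧ ∀ x ∈ p.support, x ∉ A) := by
  classical
  constructor
  · intro H
    have key : ∀ S : Finset V, ∃ g : V → ℕ, Set.InjOn g ↑S ∧
        ∀ v ∈ S, ∃ A : Finset V, v ∉ A ∧ A.card < k ∧
          ∀ w ∈ S, g w < g v →
            ¬ ∃ p : G.Walk v w, p.length ≤ r ∧ ∀ x ∈ p.support, x ∉ A := by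
      intro S
      induction S using Finset.strongInduction with
      | _ S IH =>
        rcases S.eq_empty_or_nonempty with rfl | hS
        · exact ⟨fun _ => 0, by simp, by simp⟩
        · have h1 : ¬ (∀ v ∈ (↑S : Set V), ∀ A : Finset V, v ∉ A → A.card < k →
              ∃ u ∈ (↑S : Set V), u ≠ v ∧ ∃ p : G.Walk v u, p.length ≤ r ∧
                ∀ x ∈ p.support, x ∉ A) := by
            intro h
            exact H ⟨↑S, by exact_mod_cast hS, h⟩
          push_neg at h1
          obtain ⟨v, hvS, A, hvA, hAk, hblock⟩ := h1
          have hvS' : v ∈ S := by exact_mod_cast hvS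
          obtain ⟨g, hginj, hg⟩ := IH (S.erase v) (Finset.erase_ssubset hvS')
          set N := (S.erase v).sup g + 1 with hN
          have hlt : ∀ x ∈ S.erase v, g x < N := by
            intro x hx
            exact Nat.lt_succ_of_le (Finset.le_sup hx)
          refine ⟨fun x => if x = v then N else g x, ?_, ?_⟩
          · intro a ha b hb hab
            simp only at hab
            by_cases hav : a = v <;> by_cases hbv : b = v
            · rw [hav, hbv]
            · exfalso
              rw [if_pos hav, if_neg hbv] at hab
              exact absurd hab.symm (Nat.ne_of_lt (hlt b (Finset.mem_erase.2 ⟨hbv, hb⟩)))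
            · exfalso
              rw [if_neg hav, if_pos hbv] at hab
              exact absurd hab (Nat.ne_of_lt (hlt a (Finset.mem_erase.2 ⟨hav, ha⟩)))
            · rw [if_neg hav, if_neg hbv] at hab
              exact hginj (by exact_mod_cast Finset.mem_erase.2 ⟨hav, ha⟩)
                (by exact_mod_cast Finset.mem_erase.2 ⟨hbv, hb⟩) hab
          · intro w hwS
            by_cases hwv : w = v
            · subst hwv
              refine ⟨A, hvA, hAk, ?_⟩
              rintro u huS hu ⟨p, hlen, havoid⟩
              dsimp only at hu
              have huv : u ≠ w := by
                intro h; subst h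
                simp at hu
              rw [if_neg huv, if_pos rfl] at hu
              obtain ⟨x, hx, hxA⟩ := hblock u (by exact_mod_cast huS) huv p hlen
              exact havoid x hx hxA
            · obtain ⟨A', hvA', hAk', hblock'⟩ := hg w (Finset.mem_erase.2 ⟨hwv, hwS⟩)
              refine ⟨A', hvA', hAk', ?_⟩
              rintro u huS hu hp
              dsimp only at hu
              rw [if_neg hwv] at hu
              have huv : u ≠ v := by
                intro h; subst h
                rw [if_pos rfl] at hu
                exact absurd hu (Nat.not_lt.2 (le_of_lt (hlt w (Finset.mem_erase.2 ⟨hwv, hwS⟩))))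
              rw [if_neg huv] at hu
              exact hblock' u (Finset.mem_erase.2 ⟨huv, huS⟩) hu hp
    obtain ⟨g, hginj, hg⟩ := key Finset.univ
    refine ⟨fun a b => g a < g b, ?_, ?_⟩
    · exact
        { irrefl := fun a => lt_irrefl _
          trans := fun a b c => lt_trans
          trichotomous := fun a b => by
            rcases lt_trichotomy (g a) (g b) with h | h | h
            · exact fun h1 _ => absurd h h1
            · exact fun _ _ => hginj (by simp) (by simp) h
            · exact fun _ h2 => absurd h h2 }
    · intro v
      obtain ⟨A, hvA, hAk, hb⟩ := hg v (Finset.mem_univ v)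
      exact ⟨A, hvA, hAk, fun w hw => hb w (Finset.mem_univ w) hw⟩
  · rintro ⟨lt, hsto, hA⟩ ⟨U, hUne, hU⟩
    letI : LinearOrder V := linearOrderOfSTO lt
    have hne : U.toFinset.Nonempty := by
      rwa [Set.toFinset_nonempty]
    set v := U.toFinset.max' hne with hv
    have hvU : v ∈ U := by
      have := U.toFinset.max'_mem hne
      rwa [Set.mem_toFinset] at this
    obtain ⟨A, hvA, hAk, hblock⟩ := hA v
    obtain ⟨u, huU, huv, p, hlen, havoid⟩ := hU v hvU A hvA hAk
    have hlt : lt u v := by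
      have hle : u ≤ v := U.toFinset.le_max' u (Set.mem_toFinset.2 huU)
      exact lt_of_le_of_ne hle huv
    exact hblock u hlt ⟨p, hlen, havoid⟩
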